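/- Every bipartite graph G = (U ∪ V, E) with parts V = {v₁,…,v_d} and U = {u₁,…,u_m}, d ≤ m, is general d'-word-representable for every d' ≥ d = |V|. Concretely, the word W = W₁W₂⋯W_d is a general d-word-representant, where W_i is the concatenation over j (in increasing order of j if i is odd, decreasing if i is even) of the blocks F_i(u_j), and F_i(u_j) is an alternating word of length d + 2 in letters {v_i, u_j} if {v_i, u_j} ∈ E and the empty word otherwise. -/

import Mathlib

/-- Letters `a` and `b` are `d`-intersecting in `W`. -/
def DIntersecting {V : Type*} (d : ℕ) (W : List V) (a b : V) : Prop :=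
  ∃ l : List V, l.Sublist W ∧ l.Chain' (· ≠ ·) ∧ (∀ c ∈ l, c = a ∨ c = b) ∧
    d + 2 ≤ l.length

/-- `W` general `d`-word-represents `G`. -/
def GenWordRepresents {V : Type*} (d : ℕ) (W : List V) (G : SimpleGraph V) : Prop :=
  ∀ x y : V, x ≠ y → (DIntersecting d W x y ↔ G.Adj x y)

/-- The alternating word `abab…` of length `n`. -/
def altWord {V : Type*} (a b : V) (n : ℕ) : List V :=
  (List.range n).map (fun k => if k % 2 = 0 then a else b)

/-- The block `F_i(u_j)`: an alternating word of length `d + 2` in the letters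
`v_i, u_j` if `{v_i, u_j}` is an edge, and the empty word otherwise. -/
def bipBlock {d m : ℕ} (G : SimpleGraph (Fin d ⊕ Fin m)) [DecidableRel G.Adj]
    (i : Fin d) (j : Fin m) : List (Fin d ⊕ Fin m) :=
  if G.Adj (Sum.inl i) (Sum.inr j) then altWord (Sum.inl i) (Sum.inr j) (d + 2) else []

/-- The word `W_i = F_i(u_1)⋯F_i(u_m)` (increasing order of `j` for the first, third, …
block and decreasing order for the second, fourth, … block). -/
def bipRow {d m : ℕ} (G : SimpleGraph (Fin d ⊕ Fin m)) [DecidableRel G.Adj]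
    (i : Fin d) : List (Fin d ⊕ Fin m) :=
  ((if i.val % 2 = 0 then List.finRange m else (List.finRange m).reverse).map
    (bipBlock G i)).flatten

/-- The word `W = W₁W₂⋯W_d` of the bipartite construction. -/
def bipWord (d m : ℕ) (G : SimpleGraph (Fin d ⊕ Fin m)) [DecidableRel G.Adj] :
    List (Fin d ⊕ Fin m) :=
  ((List.finRange d).map (bipRow G)).flatten
open List

section Helpers
variable {α : Type*}

theorem altWord_succ (a b : α) (n : ℕ) : altWord a b (n+1) = a :: altWord b a n := by
  unfold altWord
  rw [List.range_succ_eq_map, List.map_cons, List.map_map]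
  simp only [Nat.zero_mod, if_pos rfl]
  congr 1
  apply List.map_congr_left
  intro k _
  simp only [Function.comp_apply, Nat.succ_eq_add_one]
  rcases Nat.even_or_odd k with hk | hk
  · have h1 : k % 2 = 0 := Nat.even_iff.mp hk
    have h2 : (k+1) % 2 = 1 := by omega
    simp [h1, h2]
  · have h1 : k % 2 = 1 := Nat.odd_iff.mp hk
    have h2 : (k+1) % 2 = 0 := by omega
    simp [h1, h2]

theorem altWord_length (a b : α) (n : ℕ) : (altWord a b n).length = n := by
  simp [altWord]

theorem mem_altWord {a b c : α} {n : ℕ} (h : c ∈ altWord a b n) : c = a ∨ c = b := by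
  simp only [altWord, List.mem_map] at h
  obtain ⟨k, -, hk⟩ := h
  split_ifs at hk
  · left; exact hk.symm
  · right; exact hk.symm

theorem altWord_chain' {a b : α} (hab : a ≠ b) (n : ℕ) :
    (altWord a b n).Chain' (· ≠ ·) := by
  induction n generalizing a b with
  | zero => simp [altWord, List.Chain']
  | succ n ih =>
    rw [altWord_succ]
    cases n with
    | zero => simp [altWord, List.Chain']
    | succ k =>
      rw [altWord_succ]
      exact List.isChain_cons_cons.mpr ⟨hab, by rw [← altWord_succ]; exact ih hab.symm⟩

/-- A constant chain' (≠) list has length ≤ 1. -/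
theorem constLen {l : List α} (hc : ∀ z ∈ l, ∀ z' ∈ l, z = z')
    (hch : l.Chain' (· ≠ ·)) : l.length ≤ 1 := by
  match l with
  | [] => simp
  | [z] => simp
  | z :: z' :: t =>
    exact absurd (hc z (by simp) z' (by simp)) (List.isChain_cons_cons.mp hch).1

/-- Constant-rows bound: a chain' (≠) sublist of a flatten of constant lists has
length at most the number of lists. -/
theorem constRows : ∀ (L : List (List α)) (l : List α), l <+ L.flatten →
    l.Chain' (· ≠ ·) → (∀ M ∈ L, ∀ z ∈ M, ∀ z' ∈ M, z = z') → l.length ≤ L.length := by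
  intro L
  induction L with
  | nil => intro l h _ _; simp [List.sublist_nil.mp (by simpa using h)]
  | cons M L ih =>
    intro l h hch hconst
    rw [List.flatten_cons, List.sublist_append_iff] at h
    obtain ⟨l₁, l₂, rfl, h1, h2⟩ := h
    have hl1 : l₁.length ≤ 1 := by
      apply constLen (fun z hz z' hz' => hconst M (by simp) z (h1.mem hz) z' (h1.mem hz'))
      exact hch.prefix ⟨l₂, rfl⟩
    have hl2 : l₂.length ≤ L.length :=
      ih l₂ h2 (hch.suffix ⟨l₁, rfl⟩) (fun M' hM' => hconst M' (by simp [hM']))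
    simp only [List.length_append, List.length_cons]
    omega

end Helpers
section Zig
variable {α : Type*}

/-- The zigzag bound: rows alternately of the form `A ++ B` / `B ++ A` with `A`
constant `x` and `B` constant `y`. A chain' (≠) sublist of the flatten has length
at most `n + 1`; with previous letter `x` it has length at most `n`. -/
theorem zigTriple : ∀ (n : ℕ) (f : Fin n → List α) (x y : α),
    (∀ k : Fin n, ∃ A B, ((k.val % 2 = 0 → f k = A ++ B) ∧ (k.val % 2 ≠ 0 → f k = B ++ A)) ∧
      (∀ z ∈ A, z = x) ∧ (∀ z ∈ B, z = y)) →
    ∀ l : List α, l <+ ((List.finRange n).map f).flatten →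
      ((x :: l).Chain' (· ≠ ·) → l.length ≤ n) ∧
      ((y :: l).Chain' (· ≠ ·) → l.length ≤ n + 1) ∧
      (l.Chain' (· ≠ ·) → l.length ≤ n + 1) := by
  intro n
  induction n with
  | zero =>
    intro f x y _ l hl
    have : l = [] := List.sublist_nil.mp (by simpa using hl)
    subst this
    simp
  | succ n ih =>
    intro f x y H l hl
    rw [List.finRange_succ, List.map_cons, List.map_map, List.flatten_cons] at hl
    obtain ⟨A, B, ⟨hf0, -⟩, hA, hB⟩ := H 0
    rw [hf0 (by simp), List.append_assoc, List.sublist_append_iff] at hl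
    obtain ⟨l₁, l₂₃, rfl, hl₁, hl₂₃⟩ := hl
    rw [List.sublist_append_iff] at hl₂₃
    obtain ⟨l₂, l₃, rfl, hl₂, hl₃⟩ := hl₂₃
    -- the tail rows, with roles of x and y swapped
    have H' : ∀ k : Fin n, ∃ A' B',
        ((k.val % 2 = 0 → (f ∘ Fin.succ) k = A' ++ B') ∧
         (k.val % 2 ≠ 0 → (f ∘ Fin.succ) k = B' ++ A')) ∧
        (∀ z ∈ A', z = y) ∧ (∀ z ∈ B', z = x) := by
      intro k
      obtain ⟨A', B', ⟨he, ho⟩, hA', hB'⟩ := H k.succ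
      refine ⟨B', A', ⟨?_, ?_⟩, hB', hA'⟩
      · intro hk
        have : k.succ.val % 2 ≠ 0 := by simp [Fin.val_succ]; omega
        exact ho this
      · intro hk
        have : k.succ.val % 2 = 0 := by simp [Fin.val_succ]; omega
        exact he this
    have IH := fun l' hl' => ih (f ∘ Fin.succ) y x H' l' hl'
    have hl₁mem : ∀ z ∈ l₁, z = x := fun z hz => hA z (hl₁.mem hz)
    have hl₂mem : ∀ z ∈ l₂, z = y := fun z hz => hB z (hl₂.mem hz)
    -- the key claim: with previous letter x, the rest has length ≤ n + 1
    have claim : ∀ l₂' l₃' : List α, (∀ z ∈ l₂', z = y) → l₃' <+ ((List.finRange n).map (f ∘ Fin.succ)).flatten →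
        (x :: l₂' ++ l₃').Chain' (· ≠ ·) → (l₂' ++ l₃').length ≤ n + 1 := by
      intro l₂' l₃' hmem hsub hch
      match l₂' with
      | [] =>
        simpa using (IH l₃' hsub).2.1 (by simpa using hch)
      | z :: t =>
        have hz : z = y := hmem z (by simp)
        match t with
        | w :: t' =>
          have hw : w = y := hmem w (by simp)
          have : z ≠ w := (List.isChain_cons_cons.mp (hch.tail)).1
          exact absurd (hz.trans hw.symm) this
        | [] =>
          have hch' : (y :: l₃').Chain' (· ≠ ·) := by
            have := hch.tail
            simpa [hz, List.Chain'] using this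
          have := (IH l₃' hsub).1 hch'
          simpa using by omega
    refine ⟨?_, ?_, ?_⟩
    · -- previous letter x : length ≤ n + 1
      intro hch
      have hl₁nil : l₁ = [] := by
        match l₁ with
        | [] => rfl
        | z :: t =>
          have hz : z = x := hl₁mem z (by simp)
          have : x ≠ z := (List.isChain_cons_cons.mp (by simpa [List.Chain'] using hch)).1
          exact absurd hz.symm this
      subst hl₁nil
      simpa using claim l₂ l₃ hl₂mem hl₃ (by simpa using hch)
    · -- previous letter y : length ≤ n + 2
      intro hch
      have hchl : (l₁ ++ l₂ ++ l₃).Chain' (· ≠ ·) := by simpa [List.Chain'] using hch.tail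
      match l₁ with
      | [] =>
        match l₂ with
        | [] =>
          have := (IH l₃ hl₃).1 (by simpa using hch)
          simpa using by omega
        | z :: t =>
          have hz : z = y := hl₂mem z (by simp)
          have : y ≠ z := (List.isChain_cons_cons.mp (by simpa [List.Chain'] using hch)).1
          exact absurd hz.symm this
      | z :: t =>
        have hz : z = x := hl₁mem z (by simp)
        have ht : t = [] := by
          match t with
          | [] => rfl
          | w :: t' =>
            have hw : w = x := hl₁mem w (by simp)
            have : z ≠ w := (List.isChain_cons_cons.mp (by simpa [List.Chain'] using hchl)).1
            exact absurd (hz.trans hw.symm) this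
        subst ht
        have hch' : (x :: l₂ ++ l₃).Chain' (· ≠ ·) := by
          rw [← hz]; simpa using hchl
        have := claim l₂ l₃ hl₂mem hl₃ hch'
        simp only [List.length_append, List.length_cons, List.length_nil] at *
        omega
    · -- no previous letter : length ≤ n + 2
      intro hch
      match l₁ with
      | z :: t =>
        have hz : z = x := hl₁mem z (by simp)
        have ht : t = [] := by
          match t with
          | [] => rfl
          | w :: t' =>
            have hw : w = x := hl₁mem w (by simp)
            have hne : z ≠ w := (List.isChain_cons_cons.mp (by simpa [List.Chain'] using hch)).1
            exact absurd (hz.trans hw.symm) hne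
        subst ht
        have hch' : (x :: l₂ ++ l₃).Chain' (· ≠ ·) := by
          rw [← hz]; simpa using hch
        have := claim l₂ l₃ hl₂mem hl₃ hch'
        simp only [List.length_append, List.length_cons, List.length_nil] at *
        omega
      | [] =>
        match l₂ with
        | [] =>
          have := (IH l₃ hl₃).2.2 (by simpa using hch)
          simpa using by omega
        | z :: t =>
          have hz : z = y := hl₂mem z (by simp)
          have ht : t = [] := by
            match t with
            | [] => rfl
            | w :: t' =>
              have hw : w = y := hl₂mem w (by simp)
              have hne : z ≠ w := (List.isChain_cons_cons.mp (by simpa [List.Chain'] using hch)).1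
              exact absurd (hz.trans hw.symm) hne
          subst ht
          have hch' : (y :: l₃).Chain' (· ≠ ·) := by
            rw [← hz]; simpa using hch
          have := (IH l₃ hl₃).1 hch'
          simp only [List.length_append, List.length_cons, List.length_nil] at *
          omega

end Zig

section Gen
variable {d m : ℕ} (G : SimpleGraph (Fin d ⊕ Fin m)) [DecidableRel G.Adj]

/-- Generalized block with alternating word of length `n + 2`. -/
def genBlock (n : ℕ) (i : Fin d) (j : Fin m) : List (Fin d ⊕ Fin m) :=
  if G.Adj (Sum.inl i) (Sum.inr j) then altWord (Sum.inl i) (Sum.inr j) (n + 2) else []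

def genRow (n : ℕ) (i : Fin d) : List (Fin d ⊕ Fin m) :=
  ((if i.val % 2 = 0 then List.finRange m else (List.finRange m).reverse).map
    (genBlock G n i)).flatten

def genWord (n : ℕ) : List (Fin d ⊕ Fin m) :=
  ((List.finRange d).map (genRow G n)).flatten

theorem bipWord_eq_genWord : bipWord d m G = genWord G d := rfl

theorem mem_genBlock {n : ℕ} {i : Fin d} {j : Fin m} {c : Fin d ⊕ Fin m}
    (h : c ∈ genBlock G n i j) : (c = Sum.inl i ∨ c = Sum.inr j) ∧ G.Adj (Sum.inl i) (Sum.inr j) := by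
  unfold genBlock at h
  split_ifs at h with hadj
  · exact ⟨mem_altWord h, hadj⟩
  · simp at h

theorem mem_genRow {n : ℕ} {i : Fin d} {c : Fin d ⊕ Fin m}
    (h : c ∈ genRow G n i) : c = Sum.inl i ∨ ∃ j, c = Sum.inr j ∧ G.Adj (Sum.inl i) (Sum.inr j) := by
  unfold genRow at h
  rw [List.mem_flatten] at h
  obtain ⟨M, hM, hc⟩ := h
  rw [List.mem_map] at hM
  obtain ⟨j, -, rfl⟩ := hM
  obtain ⟨hc1, hc2⟩ := mem_genBlock G hc
  rcases hc1 with h1 | h1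
  · exact Or.inl h1
  · exact Or.inr ⟨j, h1, hc2⟩

end Gen

section Split
variable {α : Type*} {ι : Type*}

/-- flatten of a map vanishing off two indices. -/
theorem flatten_map_eq_nil {I : List ι} {h : ι → List α}
    (hh : ∀ i ∈ I, h i = []) : (I.map h).flatten = [] := by
  rw [List.flatten_eq_nil_iff]
  intro M hM
  rw [List.mem_map] at hM
  obtain ⟨i, hi, rfl⟩ := hM
  exact hh i hi

/-- Split `finRange m` around two indices `a < b`. -/
theorem finRange_split {m : ℕ} {a b : Fin m} (hab : a < b) :
    ∃ I₁ I₂ I₃ : List (Fin m), List.finRange m = I₁ ++ a :: (I₂ ++ b :: I₃) ∧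
      (∀ i ∈ I₁, i ≠ a ∧ i ≠ b) ∧ (∀ i ∈ I₂, i ≠ a ∧ i ≠ b) ∧ (∀ i ∈ I₃, i ≠ a ∧ i ≠ b) := by
  obtain ⟨s, t, hst⟩ := List.append_of_mem (List.mem_finRange a)
  have hpw : (s ++ a :: t).Pairwise (· < ·) := hst ▸ List.pairwise_lt_finRange m
  rw [List.pairwise_append] at hpw
  obtain ⟨hs, hat, hcross⟩ := hpw
  rw [List.pairwise_cons] at hat
  obtain ⟨halt, ht⟩ := hat
  have hbt : b ∈ t := by
    have hb : b ∈ s ++ a :: t := hst ▸ List.mem_finRange b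
    rw [List.mem_append, List.mem_cons] at hb
    rcases hb with hb | hb | hb
    · exact absurd (hcross b hb a (by simp)) (by simp; exact le_of_lt hab)
    · exact absurd hb (ne_of_gt hab)
    · exact hb
  obtain ⟨u, v, huv⟩ := List.append_of_mem hbt
  subst huv
  refine ⟨s, u, v, by rw [hst], ?_, ?_, ?_⟩
  · intro i hi
    have h1 : i < a := hcross i hi a (by simp)
    have h2 : i < b := lt_trans h1 hab
    exact ⟨ne_of_lt h1, ne_of_lt h2⟩
  · intro i hi
    have h1 : a < i := halt i (by simp [hi])
    have h2 : i < b := by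
      rw [List.pairwise_append] at ht
      exact ht.2.2 i hi b (by simp)
    exact ⟨ne_of_gt h1, ne_of_lt h2⟩
  · intro i hi
    have h1 : a < i := halt i (by simp [hi])
    have h2 : b < i := by
      rw [List.pairwise_append, List.pairwise_cons] at ht
      exact ht.2.1.1 i hi
    exact ⟨ne_of_gt h1, ne_of_gt h2⟩

end Split

section MainArg
variable {d m : ℕ} (G : SimpleGraph (Fin d ⊕ Fin m)) [DecidableRel G.Adj]

/-- A letters-restricted sublist of the word is a sublist of the flatten of filtered rows. -/
theorem sub_filtered (N : ℕ) (x y : Fin d ⊕ Fin m) {l : List (Fin d ⊕ Fin m)}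
    (hsub : l <+ genWord G N)
    (hmem : ∀ c ∈ l, c = x ∨ c = y) :
    l <+ ((List.finRange d).map
      (fun k => (genRow G N k).filter (fun c => decide (c = x) || decide (c = y)))).flatten := by
  set p : Fin d ⊕ Fin m → Bool := fun c => decide (c = x) || decide (c = y) with hp
  have h1 : l.filter p = l := by
    rw [List.filter_eq_self]
    intro c hc
    rcases hmem c hc with h | h <;> simp [hp, h]
  have h2 := hsub.filter p
  rw [h1] at h2
  unfold genWord at h2
  rw [List.filter_flatten, List.map_map] at h2
  exact h2

/-- Negative case: both letters in `V`. -/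
theorem neg_VV (N : ℕ) (i i' : Fin d) {l : List (Fin d ⊕ Fin m)}
    (hsub : l <+ genWord G N) (hch : l.Chain' (· ≠ ·))
    (hmem : ∀ c ∈ l, c = Sum.inl i ∨ c = Sum.inl i') : l.length ≤ d := by
  set p : Fin d ⊕ Fin m → Bool :=
    fun c => decide (c = Sum.inl i) || decide (c = Sum.inl i') with hp
  have hL := sub_filtered G N (Sum.inl i) (Sum.inl i') hsub hmem
  have := constRows _ l hL hch ?_
  · simpa using this
  · intro M hM z hz z' hz'
    rw [List.mem_map] at hM
    obtain ⟨k, -, rfl⟩ := hM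
    have key : ∀ w ∈ (genRow G N k).filter p, w = Sum.inl k := by
      intro w hw
      rw [List.mem_filter] at hw
      obtain ⟨hw1, hw2⟩ := hw
      rcases mem_genRow G hw1 with h | ⟨jj, rfl, -⟩
      · exact h
      · simp [hp] at hw2
    rw [key z hz, key z' hz']

/-- Negative case: one letter in `V`, one in `U`, non-adjacent. -/
theorem neg_mixed (N : ℕ) (i : Fin d) (j : Fin m)
    (hadj : ¬ G.Adj (Sum.inl i) (Sum.inr j)) {l : List (Fin d ⊕ Fin m)}
    (hsub : l <+ genWord G N) (hch : l.Chain' (· ≠ ·))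
    (hmem : ∀ c ∈ l, c = Sum.inl i ∨ c = Sum.inr j) : l.length ≤ d := by
  set p : Fin d ⊕ Fin m → Bool :=
    fun c => decide (c = Sum.inl i) || decide (c = Sum.inr j) with hp
  have hL := sub_filtered G N (Sum.inl i) (Sum.inr j) hsub hmem
  have := constRows _ l hL hch ?_
  · simpa using this
  · intro M hM z hz z' hz'
    rw [List.mem_map] at hM
    obtain ⟨k, -, rfl⟩ := hM
    have key : ∀ w ∈ (genRow G N k).filter p,
        w = (if k = i then Sum.inl i else (Sum.inr j : Fin d ⊕ Fin m)) := by
      intro w hw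
      rw [List.mem_filter] at hw
      obtain ⟨hw1, hw2⟩ := hw
      have hw2' : w = Sum.inl i ∨ w = Sum.inr j := by
        simp only [hp, Bool.or_eq_true, decide_eq_true_eq] at hw2
        exact hw2
      rcases mem_genRow G hw1 with h | ⟨jj, rfl, hadj'⟩
      · -- w = inl k, so w = inl i, so k = i
        rcases hw2' with h2 | h2
        · have hki : k = i := Sum.inl.inj (h.symm.trans h2)
          rw [if_pos hki]; exact h2
        · rw [h] at h2; exact absurd h2 (by simp)
      · -- w = inr jj with Adj (inl k) (inr jj)
        rcases hw2' with h2 | h2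
        · exact absurd h2 (by simp)
        · have hjj : jj = j := by simpa using h2
          subst hjj
          have : k ≠ i := fun hki => hadj (hki ▸ hadj')
          simp [this]
    rw [key z hz, key z' hz']

/-- Negative case: both letters in `U` (ordered). -/
theorem neg_UU' (N : ℕ) {j j' : Fin m} (hlt : j < j') {l : List (Fin d ⊕ Fin m)}
    (hsub : l <+ genWord G N) (hch : l.Chain' (· ≠ ·))
    (hmem : ∀ c ∈ l, c = Sum.inr j ∨ c = Sum.inr j') : l.length ≤ d + 1 := by
  set p : Fin d ⊕ Fin m → Bool :=
    fun c => decide (c = Sum.inr j) || decide (c = Sum.inr j') with hp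
  have hL := sub_filtered G N (Sum.inr j) (Sum.inr j') hsub hmem
  obtain ⟨I₁, I₂, I₃, hsplit, hI₁, hI₂, hI₃⟩ := finRange_split hlt
  have hnil : ∀ (k : Fin d) (jj : Fin m), jj ≠ j → jj ≠ j' → (genBlock G N k jj).filter p = [] := by
    intro k jj h1 h2
    rw [List.filter_eq_nil_iff]
    intro z hz
    obtain ⟨hz1, -⟩ := mem_genBlock G hz
    rcases hz1 with rfl | rfl <;> simp [hp, h1, h2]
  apply (zigTriple d (fun k => (genRow G N k).filter p) (Sum.inr j) (Sum.inr j') ?_ l hL).2.2 hch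
  intro k
  refine ⟨(genBlock G N k j).filter p, (genBlock G N k j').filter p, ⟨?_, ?_⟩, ?_, ?_⟩
  · intro hk
    beta_reduce
    unfold genRow
    rw [if_pos hk, List.filter_flatten, List.map_map, hsplit]
    simp only [List.map_append, List.map_cons, List.flatten_append, List.flatten_cons,
      Function.comp_apply]
    rw [flatten_map_eq_nil (h := filter p ∘ genBlock G N k) (I := I₁)
        (fun i hi => hnil k i (hI₁ i hi).1 (hI₁ i hi).2),
      flatten_map_eq_nil (h := filter p ∘ genBlock G N k) (I := I₂)
        (fun i hi => hnil k i (hI₂ i hi).1 (hI₂ i hi).2),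
      flatten_map_eq_nil (h := filter p ∘ genBlock G N k) (I := I₃)
        (fun i hi => hnil k i (hI₃ i hi).1 (hI₃ i hi).2)]
    simp
  · intro hk
    beta_reduce
    unfold genRow
    rw [if_neg hk, List.filter_flatten, List.map_map, hsplit]
    simp only [List.reverse_append, List.reverse_cons, List.map_append, List.map_cons,
      List.flatten_append, List.flatten_cons, Function.comp_apply, List.append_assoc,
      List.nil_append, List.map_reverse]
    have hrev : ∀ I : List (Fin m), (∀ i ∈ I, i ≠ j ∧ i ≠ j') →
        ((I.map (filter p ∘ genBlock G N k)).reverse).flatten = [] := by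
      intro I hI
      rw [← List.map_reverse]
      exact flatten_map_eq_nil
        (fun i hi => hnil k i (hI i (List.mem_reverse.mp hi)).1 (hI i (List.mem_reverse.mp hi)).2)
    rw [hrev I₁ hI₁, hrev I₂ hI₂, hrev I₃ hI₃]
    simp
  · intro z hz
    rw [List.mem_filter] at hz
    obtain ⟨hz1, hz2⟩ := hz
    rcases (mem_genBlock G hz1).1 with rfl | rfl
    · simp [hp] at hz2
    · rfl
  · intro z hz
    rw [List.mem_filter] at hz
    obtain ⟨hz1, hz2⟩ := hz
    rcases (mem_genBlock G hz1).1 with rfl | rfl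
    · simp [hp] at hz2
    · rfl

end MainArg

section Final
variable {d m : ℕ} (G : SimpleGraph (Fin d ⊕ Fin m)) [DecidableRel G.Adj]

theorem genBlock_sublist (N : ℕ) (i : Fin d) (j : Fin m) :
    genBlock G N i j <+ genWord G N := by
  have h1 : genBlock G N i j <+ genRow G N i := by
    apply List.sublist_flatten_of_mem
    rw [List.mem_map]
    refine ⟨j, ?_, rfl⟩
    split_ifs
    · exact List.mem_finRange j
    · rw [List.mem_reverse]; exact List.mem_finRange j
  have h2 : genRow G N i <+ genWord G N :=
    List.sublist_flatten_of_mem (List.mem_map.mpr ⟨i, List.mem_finRange i, rfl⟩)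
  exact h1.trans h2

theorem genRep (hV : ∀ i j : Fin d, ¬ G.Adj (Sum.inl i) (Sum.inl j))
    (hU : ∀ i j : Fin m, ¬ G.Adj (Sum.inr i) (Sum.inr j))
    (N : ℕ) (hN : d ≤ N) : GenWordRepresents N (genWord G N) G := by
  intro x y hxy
  constructor
  · rintro ⟨l, hsub, hch, hmem, hlen⟩
    match x, y with
    | Sum.inl i, Sum.inl i' =>
      have hb := neg_VV G N i i' hsub hch hmem
      exact absurd hlen (by omega)
    | Sum.inl i, Sum.inr j =>
      by_cases hadj : G.Adj (Sum.inl i) (Sum.inr j)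
      · exact hadj
      · have hb := neg_mixed G N i j hadj hsub hch hmem
        exact absurd hlen (by omega)
    | Sum.inr j, Sum.inl i =>
      by_cases hadj : G.Adj (Sum.inr j) (Sum.inl i)
      · exact hadj
      · have hb := neg_mixed G N i j (fun h => hadj h.symm) hsub hch
          (fun c hc => (hmem c hc).symm)
        exact absurd hlen (by omega)
    | Sum.inr j, Sum.inr j' =>
      exfalso
      have hjj : j ≠ j' := fun h => hxy (by rw [h])
      rcases lt_or_gt_of_ne hjj with hlt | hlt
      · have hb := neg_UU' G N hlt hsub hch hmem
        omega
      · have hb := neg_UU' G N hlt hsub hch (fun c hc => (hmem c hc).symm)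
        omega
  · intro hadj
    match x, y with
    | Sum.inl i, Sum.inl i' => exact absurd hadj (hV i i')
    | Sum.inr j, Sum.inr j' => exact absurd hadj (hU j j')
    | Sum.inl i, Sum.inr j =>
      refine ⟨altWord (Sum.inl i) (Sum.inr j) (N + 2), ?_, altWord_chain' (by simp) _,
        fun c hc => mem_altWord hc, by rw [altWord_length]⟩
      have : genBlock G N i j = altWord (Sum.inl i) (Sum.inr j) (N + 2) := if_pos hadj
      rw [← this]
      exact genBlock_sublist G N i j
    | Sum.inr j, Sum.inl i =>
      refine ⟨altWord (Sum.inl i) (Sum.inr j) (N + 2), ?_, altWord_chain' (by simp) _,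
        fun c hc => (mem_altWord hc).symm, by rw [altWord_length]⟩
      have : genBlock G N i j = altWord (Sum.inl i) (Sum.inr j) (N + 2) := if_pos hadj.symm
      rw [← this]
      exact genBlock_sublist G N i j

end Final

/-- Every bipartite graph `G = (U ∪ V, E)` with `|V| = d ≤ m = |U|` is general
`d'`-word-representable for every `d' ≥ d`; concretely, the word `W = W₁⋯W_d` built from
the blocks `F_i(u_j)` is a general `d`-word-representant of `G`. -/
theorem bipartite_genWordRepresentable (d m : ℕ) (hdm : d ≤ m)
    (G : SimpleGraph (Fin d ⊕ Fin m)) [DecidableRel G.Adj]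
    (hV : ∀ i j : Fin d, ¬ G.Adj (Sum.inl i) (Sum.inl j))
    (hU : ∀ i j : Fin m, ¬ G.Adj (Sum.inr i) (Sum.inr j)) :
    GenWordRepresents d (bipWord d m G) G ∧
      ∀ d' : ℕ, d ≤ d' → ∃ W' : List (Fin d ⊕ Fin m), GenWordRepresents d' W' G := by
  refine ⟨?_, fun d' hd' => ⟨genWord G d', genRep G hV hU d' hd'⟩⟩
  rw [bipWord_eq_genWord]
  exact genRep G hV hU d le_rfl
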